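/- Let k ≥ 1, let ‖·‖ be a norm on the space of k × k complex matrices satisfying ‖AB‖ ≤ ‖A‖·‖B‖ for all A, B, let Δ ≥ 1 be an integer, let ε > 0, and let M ≥ 1 be a real number. Let Q₀, …, Q_{Δ−1}, Q̃₀, …, Q̃_{Δ−1}, and P̃₀, …, P̃_Δ be k × k complex matrices such that: (i) P̃₀ is the identity matrix; (ii) ‖Q_q‖ + ε ≤ M for all 0 ≤ q < Δ; (iii) ‖Q̃_q − Q_q‖ ≤ (1/(2Δ)) · M^{1−Δ} · ε for all 0 ≤ q < Δ; and (iv) ‖P̃_{q+1} − Q̃_q · P̃_q‖ ≤ (1/(2Δ)) · M^{−Δ+q+1} · ε for all 0 ≤ q < Δ. Then ‖P̃_Δ − Q_{Δ−1} · Q_{Δ−2} ⋯ Q₀‖ ≤ ε. -/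

import Mathlib

/-- `prodSeq k Q q = Q (q-1) * Q (q-2) * ⋯ * Q 0` (the empty product for
`q = 0` being the identity). -/
noncomputable def prodSeq (k : ℕ) (Q : ℕ → Matrix (Fin k) (Fin k) ℂ) :
    ℕ → Matrix (Fin k) (Fin k) ℂ
  | 0 => 1
  | q + 1 => Q q * prodSeq k Q q

/-- Correctness of truncated binary splitting: the final accumulated truncated
product `P̃_Δ` approximates the exact product `Q_{Δ-1} ⋯ Q_0` within `ε`. -/
theorem truncBinSplit_correct (k : ℕ) (hk : 1 ≤ k)
    (f : Matrix (Fin k) (Fin k) ℂ → ℝ)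
    (hf_zero : ∀ A, f A = 0 ↔ A = 0)
    (hf_add : ∀ A B, f (A + B) ≤ f A + f B)
    (hf_smul : ∀ (c : ℂ) (A), f (c • A) = ‖c‖ * f A)
    (hf_mul : ∀ A B, f (A * B) ≤ f A * f B)
    (Δ : ℕ) (hΔ : 1 ≤ Δ) (ε : ℝ) (hε : 0 < ε) (M : ℝ) (hM : 1 ≤ M)
    (Q Qt Pt : ℕ → Matrix (Fin k) (Fin k) ℂ)
    (hP0 : Pt 0 = 1)
    (hQM : ∀ q < Δ, f (Q q) + ε ≤ M)
    (hQt : ∀ q < Δ, f (Qt q - Q q) ≤ 1 / (2 * (Δ : ℝ)) * M ^ (1 - (Δ : ℤ)) * ε)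
    (hPt : ∀ q < Δ, f (Pt (q + 1) - Qt q * Pt q) ≤
      1 / (2 * (Δ : ℝ)) * M ^ (-(Δ : ℤ) + (q : ℤ) + 1) * ε) :
    f (Pt Δ - prodSeq k Q Δ) ≤ ε := by
  have hM0 : (0:ℝ) < M := lt_of_lt_of_le one_pos hM
  have hMne : M ≠ 0 := ne_of_gt hM0
  have hD : (0:ℝ) < (Δ:ℝ) := by exact_mod_cast Nat.lt_of_lt_of_le Nat.zero_lt_one hΔ
  have hf0 : f 0 = 0 := (hf_zero 0).mpr rfl
  have hfneg : ∀ A, f (-A) = f A := by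
    intro A
    have h := hf_smul (-1) A
    simpa using h
  have hfnonneg : ∀ A, 0 ≤ f A := by
    intro A
    have h := hf_add A (-A)
    rw [add_neg_cancel, hf0, hfneg] at h
    linarith
  have hεM : ε ≤ M := by
    have h := hQM 0 hΔ
    have := hfnonneg (Q 0)
    linarith
  have hMε : 0 ≤ M - ε := by linarith
  have hz : ∀ a b : ℤ, a ≤ b → M ^ a ≤ M ^ b := fun a b hab => zpow_le_zpow_right₀ hM hab
  have hzpos : ∀ a : ℤ, (0:ℝ) < M ^ a := fun a => zpow_pos hM0 a
  -- bound on the exact products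
  have hprod : ∀ q, 1 ≤ q → q ≤ Δ → f (prodSeq k Q q) ≤ (M - ε) * M ^ ((q:ℤ) - 1) := by
    intro q hq
    induction q, hq using Nat.le_induction with
    | base =>
      intro _
      have h := hQM 0 hΔ
      simp only [prodSeq, mul_one]
      push_cast
      simp only [sub_self, zpow_zero, mul_one]
      linarith
    | succ n hn ih =>
      intro hΔn
      have ihn := ih (by omega)
      have h3 : f (Q n) ≤ M - ε := by
        have := hQM n (by omega)
        linarith
      have h4 : f (prodSeq k Q n) ≤ M ^ (n:ℤ) := by
        have h5 : (M - ε) * M ^ ((n:ℤ) - 1) ≤ M * M ^ ((n:ℤ) - 1) := by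
          have := (hzpos ((n:ℤ) - 1)).le
          nlinarith
        have h6 : M * M ^ ((n:ℤ) - 1) = M ^ (n:ℤ) := by
          rw [mul_comm, ← zpow_add_one₀ hMne]
          congr 1
          ring
        linarith
      calc f (prodSeq k Q (n+1)) ≤ f (Q n) * f (prodSeq k Q n) := hf_mul _ _
        _ ≤ (M - ε) * M ^ (n:ℤ) :=
            mul_le_mul h3 h4 (hfnonneg _) hMε
        _ = (M - ε) * M ^ ((↑(n+1):ℤ) - 1) := by
            congr 1
            congr 1
            push_cast
            ring
  -- main induction
  have main : ∀ q, q ≤ Δ → f (Pt q - prodSeq k Q q) ≤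
      ((q:ℝ) / Δ) * M ^ ((q:ℤ) - Δ) * ε := by
    intro q
    induction q with
    | zero =>
      intro _
      simp [prodSeq, hP0, hf0]
    | succ n ih =>
      intro hle
      have hnΔ : n < Δ := hle
      have ihn := ih (le_of_lt hnΔ)
      have hQtn := hQt n hnΔ
      have hPtn := hPt n hnΔ
      have hQMn := hQM n hnΔ
      rcases Nat.eq_zero_or_pos n with hn0 | hnpos
      · -- n = 0
        subst hn0
        have key : Pt 1 - prodSeq k Q 1 = (Pt 1 - Qt 0 * Pt 0) + (Qt 0 - Q 0) := by
          simp only [prodSeq, hP0, mul_one]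
          abel
        have h1 : f (Pt 1 - prodSeq k Q 1) ≤ f (Pt 1 - Qt 0 * Pt 0) + f (Qt 0 - Q 0) := by
          rw [key]; exact hf_add _ _
        have e1 : (-(Δ:ℤ) + ((0:ℕ):ℤ) + 1) = 1 - (Δ:ℤ) := by push_cast; ring
        rw [e1] at hPtn
        have hne : (Δ:ℝ) ≠ 0 := ne_of_gt hD
        have hsum : 1 / (Δ:ℝ) * M ^ (1 - (Δ:ℤ)) * ε =
            1 / (2 * (Δ:ℝ)) * M ^ (1 - (Δ:ℤ)) * ε + 1 / (2 * (Δ:ℝ)) * M ^ (1 - (Δ:ℤ)) * ε := by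
          field_simp
          ring
        calc f (Pt (0+1) - prodSeq k Q (0+1)) ≤
            1 / (Δ:ℝ) * M ^ (1 - (Δ:ℤ)) * ε := by linarith
          _ = _ := by push_cast; norm_num
      · -- n ≥ 1
        have hPtbound : f (Pt n) ≤ M ^ (n:ℤ) := by
          have hsplit : f (Pt n) ≤ f (Pt n - prodSeq k Q n) + f (prodSeq k Q n) := by
            have := hf_add (Pt n - prodSeq k Q n) (prodSeq k Q n)
            simpa using this
          have hp := hprod n hnpos (le_of_lt hnΔ)
          have hq1 : (n:ℝ) / Δ ≤ 1 := by
            rw [div_le_one hD]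
            exact_mod_cast le_of_lt hnΔ
          have hz1 : M ^ ((n:ℤ) - Δ) ≤ M ^ ((n:ℤ) - 1) := by
            apply hz; omega
          have hb1 : ((n:ℝ) / Δ) * M ^ ((n:ℤ) - Δ) * ε ≤ M ^ ((n:ℤ) - 1) * ε := by
            have h0 : (0:ℝ) ≤ (n:ℝ) / Δ := by positivity
            have hb0 : ((n:ℝ) / Δ) * M ^ ((n:ℤ) - Δ) ≤ 1 * M ^ ((n:ℤ) - 1) :=
              mul_le_mul hq1 hz1 (hzpos _).le zero_le_one
            rw [one_mul] at hb0
            exact mul_le_mul_of_nonneg_right hb0 hε.le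
          have h6 : M * M ^ ((n:ℤ) - 1) = M ^ (n:ℤ) := by
            rw [mul_comm, ← zpow_add_one₀ hMne]; congr 1; ring
          nlinarith [(hzpos ((n:ℤ) - 1)).le]
        have key : Pt (n+1) - prodSeq k Q (n+1) =
            (Pt (n+1) - Qt n * Pt n) +
              ((Qt n - Q n) * Pt n + Q n * (Pt n - prodSeq k Q n)) := by
          show Pt (n+1) - Q n * prodSeq k Q n = _
          noncomm_ring
        have h1 : f (Pt (n+1) - prodSeq k Q (n+1)) ≤
            f (Pt (n+1) - Qt n * Pt n) +
              (f ((Qt n - Q n) * Pt n) + f (Q n * (Pt n - prodSeq k Q n))) := by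
          rw [key]
          calc f _ ≤ f (Pt (n+1) - Qt n * Pt n) +
              f ((Qt n - Q n) * Pt n + Q n * (Pt n - prodSeq k Q n)) := hf_add _ _
            _ ≤ _ := add_le_add (le_refl _) (hf_add _ _)
        have hT2 : f ((Qt n - Q n) * Pt n) ≤
            (1 / (2 * (Δ:ℝ)) * M ^ (1 - (Δ:ℤ)) * ε) * M ^ (n:ℤ) := by
          calc f ((Qt n - Q n) * Pt n) ≤ f (Qt n - Q n) * f (Pt n) := hf_mul _ _
            _ ≤ _ := by
                apply mul_le_mul hQtn hPtbound (hfnonneg _)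
                positivity
        have hT3 : f (Q n * (Pt n - prodSeq k Q n)) ≤
            M * (((n:ℝ) / Δ) * M ^ ((n:ℤ) - Δ) * ε) := by
          calc f (Q n * (Pt n - prodSeq k Q n)) ≤
              f (Q n) * f (Pt n - prodSeq k Q n) := hf_mul _ _
            _ ≤ _ := by
                apply mul_le_mul (by linarith [hfnonneg (Q n)]) ihn (hfnonneg _) (le_of_lt hM0)
        -- arithmetic: combine
        have ez1 : M ^ (-(Δ:ℤ) + (n:ℤ) + 1) = M ^ ((n:ℤ) + 1 - Δ) := by congr 1; ring
        have ez2 : M ^ (1 - (Δ:ℤ)) * M ^ (n:ℤ) = M ^ ((n:ℤ) + 1 - Δ) := by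
          rw [← zpow_add₀ hMne]; congr 1; ring
        have ez3 : M * M ^ ((n:ℤ) - Δ) = M ^ ((n:ℤ) + 1 - Δ) := by
          rw [mul_comm, ← zpow_add_one₀ hMne]
          congr 1; ring
        have egoal : ((↑(n+1):ℤ) - (Δ:ℤ)) = (n:ℤ) + 1 - Δ := by push_cast; ring
        rw [egoal]
        have hsum : 1 / (2 * (Δ:ℝ)) * M ^ ((n:ℤ) + 1 - Δ) * ε +
            (1 / (2 * (Δ:ℝ)) * M ^ ((n:ℤ) + 1 - Δ) * ε +
              ((n:ℝ) / Δ) * M ^ ((n:ℤ) + 1 - Δ) * ε) =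
            ((↑(n+1):ℝ) / Δ) * M ^ ((n:ℤ) + 1 - Δ) * ε := by
          have hne : (Δ:ℝ) ≠ 0 := ne_of_gt hD
          push_cast
          field_simp
          ring
        rw [ez1] at hPtn
        have hT2' : f ((Qt n - Q n) * Pt n) ≤
            1 / (2 * (Δ:ℝ)) * M ^ ((n:ℤ) + 1 - Δ) * ε := by
          calc f ((Qt n - Q n) * Pt n) ≤ _ := hT2
            _ = 1 / (2 * (Δ:ℝ)) * M ^ ((n:ℤ) + 1 - Δ) * ε := by
                rw [← ez2]; ring
        have hT3' : f (Q n * (Pt n - prodSeq k Q n)) ≤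
            ((n:ℝ) / Δ) * M ^ ((n:ℤ) + 1 - Δ) * ε := by
          calc f (Q n * (Pt n - prodSeq k Q n)) ≤ _ := hT3
            _ = ((n:ℝ) / Δ) * M ^ ((n:ℤ) + 1 - Δ) * ε := by
                rw [← ez3]; ring
        linarith
  have hfinal := main Δ le_rfl
  have e0 : ((Δ:ℤ) - (Δ:ℤ)) = 0 := by ring
  rw [e0, zpow_zero, div_self (ne_of_gt hD)] at hfinal
  linarith
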